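/- Let A ∈ ℝ^{n×n} be symmetric with nonnegative entries and strictly positive row sums d_i = Σ_j A_{ij}, let S = D_G^{-1/2} A D_G^{-1/2}, let 0 ≤ β < 1, γ = 1 − β, and let Y ∈ ℝ^{n×c} be entrywise nonnegative. Then the iterates F^{(r+1)} = β·S·F^{(r)} + γ·Y with F^{(0)} = Y converge to F* = γ·(I − βS)^{-1}·Y, the unique solution of (I − βS)F = γY, and F* is entrywise nonnegative. -/

import Mathlib

/-- **Lemma (convergence of standard label spreading).**
With `S = D_G^{-1/2} A D_G^{-1/2}` the normalized adjacency matrix, `0 ≤ β < 1`,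
`γ = 1 − β`, and `Y` entrywise nonnegative, the iterates
`F⁽ʳ⁺¹⁾ = β S F⁽ʳ⁾ + γ Y` with `F⁽⁰⁾ = Y` converge to
`F* = γ (I − βS)⁻¹ Y`, the unique solution of `(I − βS)F = γY`, and `F*` is
entrywise nonnegative. -/
theorem standard_label_spreading_convergence
    (n c : ℕ)
    (A : Matrix (Fin n) (Fin n) ℝ) (hAsymm : A.IsSymm) (hA : ∀ i j, 0 ≤ A i j)
    (d : Fin n → ℝ) (hd : ∀ i, d i = ∑ j, A i j) (hdpos : ∀ i, 0 < d i)
    (S : Matrix (Fin n) (Fin n) ℝ)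
    (hS : ∀ i j, S i j = A i j / (Real.sqrt (d i) * Real.sqrt (d j)))
    (β γ : ℝ) (hβ0 : 0 ≤ β) (hβ1 : β < 1) (hγ : γ = 1 - β)
    (Y : Matrix (Fin n) (Fin c) ℝ) (hY : ∀ i l, 0 ≤ Y i l)
    (Fseq : ℕ → Matrix (Fin n) (Fin c) ℝ) (hF0 : Fseq 0 = Y)
    (hFrec : ∀ r : ℕ, Fseq (r + 1) = β • (S * Fseq r) + γ • Y) :
    IsUnit (1 - β • S) ∧
    ∃ Fstar : Matrix (Fin n) (Fin c) ℝ,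
      Fstar = γ • ((1 - β • S)⁻¹ * Y) ∧
      (1 - β • S) * Fstar = γ • Y ∧
      (∀ G : Matrix (Fin n) (Fin c) ℝ, (1 - β • S) * G = γ • Y → G = Fstar) ∧
      (∀ i l, 0 ≤ Fstar i l) ∧
      Filter.Tendsto Fseq Filter.atTop (nhds Fstar) := by
  -- basic positivity facts
  have hspos : ∀ i, 0 < Real.sqrt (d i) := fun i => Real.sqrt_pos.mpr (hdpos i)
  have hdne : ∀ i, d i ≠ 0 := fun i => (hdpos i).ne'
  have hds : ∀ i, Real.sqrt (d i) * Real.sqrt (d i) = d i :=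
    fun i => Real.mul_self_sqrt (hdpos i).le
  -- the stochastic matrix P = D⁻¹ A
  set P : Matrix (Fin n) (Fin n) ℝ := Matrix.of (fun i j => A i j / d i) with hPdef
  have hPnn : ∀ i j, 0 ≤ P i j := fun i j => div_nonneg (hA i j) (hdpos i).le
  have hProw : ∀ i, ∑ j, P i j = 1 := by
    intro i
    have h1 : ∑ j, P i j = (∑ j, A i j) / d i := by
      rw [Finset.sum_div]; rfl
    rw [h1, ← hd i, div_self (hdne i)]
  have hPpow_nn : ∀ r i j, 0 ≤ (P ^ r) i j := by
    intro r
    induction r with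
    | zero =>
      intro i j
      rw [pow_zero]
      by_cases h : i = j <;> simp [Matrix.one_apply, h]
    | succ r ih =>
      intro i j
      rw [pow_succ, Matrix.mul_apply]
      exact Finset.sum_nonneg fun k _ => mul_nonneg (ih i k) (hPnn k j)
  have hPpow_row : ∀ r i, ∑ j, (P ^ r) i j = 1 := by
    intro r
    induction r with
    | zero => intro i; simp [Matrix.one_apply]
    | succ r ih =>
      intro i
      simp only [pow_succ, Matrix.mul_apply]
      rw [Finset.sum_comm]
      calc ∑ k, ∑ j, (P ^ r) i k * P k j
          = ∑ k, (P ^ r) i k * ∑ j, P k j := by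
            simp [Finset.mul_sum]
        _ = 1 := by simp only [hProw, mul_one]; exact ih i
  have hPpow_le_one : ∀ r i j, (P ^ r) i j ≤ 1 := by
    intro r i j
    calc (P ^ r) i j ≤ ∑ k, (P ^ r) i k :=
          Finset.single_le_sum (fun k _ => hPpow_nn r i k) (Finset.mem_univ j)
      _ = 1 := hPpow_row r i
  -- diagonal factors
  set Dh : Matrix (Fin n) (Fin n) ℝ := Matrix.diagonal (fun i => Real.sqrt (d i)) with hDh
  set Dhinv : Matrix (Fin n) (Fin n) ℝ :=
    Matrix.diagonal (fun i => (Real.sqrt (d i))⁻¹) with hDhinv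
  have hDinvD : Dhinv * Dh = 1 := by
    rw [hDhinv, hDh, Matrix.diagonal_mul_diagonal, ← Matrix.diagonal_one]
    exact congrArg Matrix.diagonal (funext fun i => inv_mul_cancel₀ (hspos i).ne')
  have hSentry : ∀ (M : Matrix (Fin n) (Fin n) ℝ) i j,
      (Dh * M * Dhinv) i j = Real.sqrt (d i) * M i j * (Real.sqrt (d j))⁻¹ := by
    intro M i j
    rw [Matrix.mul_diagonal, Matrix.diagonal_mul]
  have hSfact : S = Dh * P * Dhinv := by
    ext i j
    rw [hSentry, hS]
    have hPij : P i j = A i j / d i := rfl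
    rw [hPij, ← hds i]
    rw [Real.sqrt_mul_self (hspos i).le]
    field_simp [(hspos i).ne', (hspos j).ne']
  have hSpow : ∀ r, S ^ r = Dh * (P ^ r) * Dhinv := by
    intro r
    induction r with
    | zero =>
      rw [pow_zero, pow_zero, Matrix.mul_one, hDh, hDhinv,
        Matrix.diagonal_mul_diagonal, ← Matrix.diagonal_one]
      exact congrArg Matrix.diagonal (funext fun i => (mul_inv_cancel₀ (hspos i).ne').symm)
    | succ r ih =>
      rw [pow_succ, pow_succ, ih, hSfact]
      simp only [Matrix.mul_assoc]
      rw [← Matrix.mul_assoc Dhinv Dh, hDinvD, Matrix.one_mul]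
  -- invertibility
  have hdet : (1 - β • S).det ≠ 0 := by
    intro hzero
    obtain ⟨v, hv0, hv⟩ := Matrix.exists_mulVec_eq_zero_iff.mpr hzero
    have hv' : ∀ i, v i = β * ∑ j, S i j * v j := by
      intro i
      have h1 : (1 - β • S).mulVec v = 0 := hv
      rw [Matrix.sub_mulVec, Matrix.one_mulVec, Matrix.smul_mulVec] at h1
      have h2 := congrFun h1 i
      simp only [Pi.sub_apply, Pi.smul_apply, Pi.zero_apply, smul_eq_mul,
        Matrix.mulVec, dotProduct] at h2
      linarith [h2]
    set y : Fin n → ℝ := fun j => v j / Real.sqrt (d j) with hy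
    have hyrec : ∀ i, y i = β * ∑ j, P i j * y j := by
      intro i
      have hsum : ∑ j, P i j * y j = (∑ j, S i j * v j) / Real.sqrt (d i) := by
        rw [Finset.sum_div]
        apply Finset.sum_congr rfl
        intro j _
        have hPij : P i j = A i j / d i := rfl
        rw [hy, hS, hPij, ← hds i]
        rw [Real.sqrt_mul_self (hspos i).le]
        field_simp [(hspos i).ne', (hspos j).ne']
      rw [hsum, hy]
      show v i / Real.sqrt (d i) = β * ((∑ j, S i j * v j) / Real.sqrt (d i))
      rw [hv' i]
      ring
    rcases Nat.eq_zero_or_pos n with hn | hn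
    · exact hv0 (funext fun i => absurd i.2 (by omega))
    · have : Nonempty (Fin n) := ⟨⟨0, hn⟩⟩
      obtain ⟨i0, hi0⟩ := Finite.exists_max (fun i => |y i|)
      have hbound : |y i0| ≤ β * |y i0| := by
        calc |y i0| = |β * ∑ j, P i0 j * y j| := by rw [← hyrec]
          _ = β * |∑ j, P i0 j * y j| := by rw [abs_mul, abs_of_nonneg hβ0]
          _ ≤ β * ∑ j, |P i0 j * y j| :=
              mul_le_mul_of_nonneg_left (Finset.abs_sum_le_sum_abs _ _) hβ0
          _ ≤ β * ∑ j, P i0 j * |y i0| := by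
              apply mul_le_mul_of_nonneg_left _ hβ0
              apply Finset.sum_le_sum
              intro j _
              rw [abs_mul, abs_of_nonneg (hPnn i0 j)]
              exact mul_le_mul_of_nonneg_left (hi0 j) (hPnn i0 j)
          _ = β * |y i0| := by rw [← Finset.sum_mul, hProw, one_mul]
      have hy0 : |y i0| = 0 := by nlinarith [abs_nonneg (y i0)]
      apply hv0
      funext j
      have hj : |y j| = 0 := le_antisymm (hy0 ▸ hi0 j) (abs_nonneg _)
      have hyj : v j / Real.sqrt (d j) = 0 := abs_eq_zero.mp hj
      have := div_eq_zero_iff.mp hyj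
      rcases this with h | h
      · exact h
      · exact absurd h (hspos j).ne'
  have hUnit : IsUnit (1 - β • S) :=
    (Matrix.isUnit_iff_isUnit_det _).mpr (isUnit_iff_ne_zero.mpr hdet)
  set Fstar : Matrix (Fin n) (Fin c) ℝ := γ • ((1 - β • S)⁻¹ * Y) with hFstar
  have heq : (1 - β • S) * Fstar = γ • Y := by
    rw [hFstar, Matrix.mul_smul, ← Matrix.mul_assoc,
      Matrix.mul_nonsing_inv _ (isUnit_iff_ne_zero.mpr hdet), Matrix.one_mul]
  have huniq : ∀ G : Matrix (Fin n) (Fin c) ℝ, (1 - β • S) * G = γ • Y → G = Fstar := by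
    intro G hG
    have h2 : (1 - β • S)⁻¹ * ((1 - β • S) * G)
        = (1 - β • S)⁻¹ * ((1 - β • S) * Fstar) := by rw [hG, heq]
    rwa [← Matrix.mul_assoc, ← Matrix.mul_assoc,
      Matrix.nonsing_inv_mul _ (isUnit_iff_ne_zero.mpr hdet), Matrix.one_mul,
      Matrix.one_mul] at h2
  -- fixed point equation
  have hfix : Fstar = β • (S * Fstar) + γ • Y := by
    have h := heq
    rw [Matrix.sub_mul, Matrix.one_mul, Matrix.smul_mul] at h
    rw [← h]
    abel
  -- difference formula
  have hdiff : ∀ r, Fseq r - Fstar = (β • S) ^ r * (Y - Fstar) := by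
    intro r
    induction r with
    | zero => rw [hF0, pow_zero, Matrix.one_mul]
    | succ r ih =>
      rw [hFrec r, pow_succ']
      conv_lhs => rw [hfix]
      have h3 : β • (S * Fseq r) + γ • Y - (β • (S * Fstar) + γ • Y)
          = β • (S * (Fseq r - Fstar)) := by
        rw [Matrix.mul_sub, smul_sub]; abel
      rw [h3, ih, ← Matrix.smul_mul, Matrix.mul_assoc]
  -- per-entry convergence
  have hTend : ∀ i l, Filter.Tendsto (fun r => Fseq r i l) Filter.atTop
      (nhds (Fstar i l)) := by
    intro i l
    rw [← tendsto_sub_nhds_zero_iff]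
    set E := Y - Fstar with hE
    set C : ℝ := Real.sqrt (d i) * ∑ j, (Real.sqrt (d j))⁻¹ * |E j l| with hC
    apply squeeze_zero_norm (a := fun r => β ^ r * C)
    · intro r
      have h1 : Fseq r i l - Fstar i l = ((β • S) ^ r * E) i l := by
        have := congrFun (congrFun (hdiff r) i) l
        simpa [Matrix.sub_apply] using this
      rw [Real.norm_eq_abs, h1]
      have h2 : ((β • S) ^ r * E) i l = β ^ r * ((S ^ r * E) i l) := by
        rw [smul_pow, Matrix.smul_mul, Matrix.smul_apply, smul_eq_mul]
      rw [h2, abs_mul, abs_of_nonneg (pow_nonneg hβ0 r)]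
      apply mul_le_mul_of_nonneg_left _ (pow_nonneg hβ0 r)
      rw [hSpow r, Matrix.mul_apply]
      calc |∑ j, (Dh * P ^ r * Dhinv) i j * E j l|
          ≤ ∑ j, |(Dh * P ^ r * Dhinv) i j * E j l| := Finset.abs_sum_le_sum_abs _ _
        _ ≤ ∑ j, Real.sqrt (d i) * ((Real.sqrt (d j))⁻¹ * |E j l|) := by
            apply Finset.sum_le_sum
            intro j _
            rw [hSentry, abs_mul]
            have hnn : 0 ≤ Real.sqrt (d i) * (P ^ r) i j * (Real.sqrt (d j))⁻¹ := by
              have := hPpow_nn r i j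
              have h4 := (hspos i).le
              have h5 := (hspos j).le
              positivity
            rw [abs_of_nonneg hnn]
            calc Real.sqrt (d i) * (P ^ r) i j * (Real.sqrt (d j))⁻¹ * |E j l|
                ≤ Real.sqrt (d i) * 1 * (Real.sqrt (d j))⁻¹ * |E j l| := by
                  apply mul_le_mul_of_nonneg_right _ (abs_nonneg _)
                  apply mul_le_mul_of_nonneg_right _ (by positivity)
                  exact mul_le_mul_of_nonneg_left (hPpow_le_one r i j) (hspos i).le
              _ = Real.sqrt (d i) * ((Real.sqrt (d j))⁻¹ * |E j l|) := by ring
        _ = C := by rw [hC, Finset.mul_sum]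
    · have := (tendsto_pow_atTop_nhds_zero_of_lt_one hβ0 hβ1).mul_const C
      simpa using this
  -- nonnegativity of the iterates, hence of the limit
  have hFnn : ∀ r i l, 0 ≤ Fseq r i l := by
    intro r
    induction r with
    | zero => rw [hF0]; exact hY
    | succ r ih =>
      intro i l
      rw [hFrec r]
      simp only [Matrix.add_apply, Matrix.smul_apply, smul_eq_mul, Matrix.mul_apply]
      have hSnn : ∀ i j, 0 ≤ S i j := by
        intro i j
        rw [hS]
        have h4 := (hspos i).le
        have h5 := (hspos j).le
        have := hA i j
        positivity
      apply add_nonneg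
      · exact mul_nonneg hβ0 (Finset.sum_nonneg fun k _ =>
          mul_nonneg (hSnn i k) (ih k l))
      · exact mul_nonneg (by rw [hγ]; linarith) (hY i l)
  refine ⟨hUnit, Fstar, rfl, heq, huniq, ?_, ?_⟩
  · intro i l
    exact ge_of_tendsto' (hTend i l) fun r => hFnn r i l
  · apply tendsto_pi_nhds.mpr
    intro i
    rw [tendsto_pi_nhds]
    intro l
    exact hTend i l
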